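/- Let (A, θ) be a connected monounary algebra. Then A is ultrahomogeneous if and only if for all x, y ∈ A, if ht(x) = ht(y) then |θ⁻¹(x)| = |θ⁻¹(y)| (heights and cardinalities possibly infinite). -/
import Mathlib


/-- The subalgebra of `(A, θ)` generated by `S`. -/
def cl {A : Type*} (θ : A → A) (S : Set A) : Set A :=
  {a | ∃ s ∈ S, ∃ n : ℕ, θ^[n] s = a}

/-- `f` restricts to an isomorphism from the subalgebra `B` onto the subalgebra `B'`. -/
def IsoOn {A : Type*} (θ : A → A) (B B' : Set A) (f : A → A) : Prop :=
  Set.BijOn f B B' ∧ ∀ a ∈ B, f (θ a) = θ (f a)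

/-- `f` (defined on `B`) extends to an automorphism of `(A, θ)`. -/
def ExtendsToAuto {A : Type*} (θ : A → A) (B : Set A) (f : A → A) : Prop :=
  ∃ g : A → A, Function.Bijective g ∧ (∀ a, g (θ a) = θ (g a)) ∧ ∀ a ∈ B, g a = f a

namespace Stmt16

open Set Function Cardinal

variable {A : Type*}

/-- The cardinal condition (right-hand side of the theorem). -/
def HC (θ : A → A) : Prop :=
  ∀ x y : A,
    (∀ n : ℕ, (∃ k ≥ 1, θ^[k] (θ^[n] x) = θ^[n] x) ↔
      (∃ k ≥ 1, θ^[k] (θ^[n] y) = θ^[n] y)) →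
    Cardinal.mk {a | θ a = x} = Cardinal.mk {a | θ a = y}

/-- Stages of the closure of `S` under preimages. -/
def Dn (θ : A → A) (S : Set A) : ℕ → Set A
  | 0 => cl θ S
  | n + 1 => Dn θ S n ∪ {a | θ a ∈ Dn θ S n}

lemma cl_closed (θ : A → A) {S : Set A} {a : A} (h : a ∈ cl θ S) : θ a ∈ cl θ S := by
  obtain ⟨s, hs, n, rfl⟩ := h
  exact ⟨s, hs, n + 1, by rw [Function.iterate_succ_apply']⟩

lemma Dn_closed (θ : A → A) {S : Set A} {n : ℕ} {a : A} (h : a ∈ Dn θ S n) :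
    θ a ∈ Dn θ S n := by
  induction n with
  | zero => exact cl_closed θ h
  | succ n ih =>
    rcases h with h | h
    · exact Or.inl (ih h)
    · exact Or.inl h

lemma Dn_succ_subset (θ : A → A) (S : Set A) (n : ℕ) : Dn θ S n ⊆ Dn θ S (n + 1) :=
  Set.subset_union_left

lemma Dn_mono (θ : A → A) (S : Set A) {m n : ℕ} (h : m ≤ n) : Dn θ S m ⊆ Dn θ S n := by
  induction h with
  | refl => exact subset_rfl
  | step _ ih => exact ih.trans (Dn_succ_subset θ S _)
  
lemma Dn_zero (θ : A → A) (S : Set A) : Dn θ S 0 = cl θ S := rfl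

lemma Dn_iter (θ : A → A) {S : Set A} {j : ℕ} :
    ∀ (k : ℕ) (a : A), θ^[k] a ∈ Dn θ S j → a ∈ Dn θ S (j + k) := by
  intro k
  induction k with
  | zero => intro a h; exact h
  | succ k ih =>
    intro a h
    rw [Function.iterate_succ_apply] at h
    exact Or.inr (ih (θ a) h)

lemma Dn_covers (θ : A → A) (hconn : ∀ x y : A, ∃ n m : ℕ, θ^[n] x = θ^[m] y)
    {S : Set A} {s₀ : A} (hs₀ : s₀ ∈ S) (a : A) : ∃ n, a ∈ Dn θ S n := by
  obtain ⟨n, m, hnm⟩ := hconn a s₀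
  have h0 : θ^[n] a ∈ Dn θ S 0 := ⟨s₀, hs₀, m, hnm.symm⟩
  exact ⟨0 + n, Dn_iter θ n a h0⟩

lemma iterate_mem_closed (θ : A → A) {B : Set A} (hB : ∀ a ∈ B, θ a ∈ B) {a : A}
    (ha : a ∈ B) (k : ℕ) : θ^[k] a ∈ B := by
  induction k with
  | zero => exact ha
  | succ k ih => rw [Function.iterate_succ_apply']; exact hB _ ih

lemma comm_iter (θ : A → A) {B : Set A} (hB : ∀ a ∈ B, θ a ∈ B) {g : A → A}
    (hg : ∀ a ∈ B, g (θ a) = θ (g a)) (k : ℕ) :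
    ∀ a ∈ B, g (θ^[k] a) = θ^[k] (g a) := by
  induction k with
  | zero => intro a _; rfl
  | succ k ih =>
    intro a ha
    rw [Function.iterate_succ_apply, Function.iterate_succ_apply,
      ih (θ a) (hB a ha), hg a ha]

lemma iter_comm (θ : A → A) (a b : ℕ) (z : A) : θ^[a] (θ^[b] z) = θ^[b] (θ^[a] z) := by
  rw [← Function.iterate_add_apply, ← Function.iterate_add_apply, Nat.add_comm]

lemma iterate_mul_cyc (θ : A → A) {u : A} {k : ℕ} (h : θ^[k] u = u) (M : ℕ) :
    θ^[M * k] u = u := by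
  induction M with
  | zero => simp
  | succ M ih =>
    have : (M + 1) * k = M * k + k := by ring
    rw [this, Function.iterate_add_apply, h, ih]

/-- In a connected algebra, any cyclic element is in the orbit of any other cyclic
element. -/
lemma cyc_orbit (θ : A → A) (hconn : ∀ x y : A, ∃ n m : ℕ, θ^[n] x = θ^[m] y)
    {u v : A} (hv : ∃ k ≥ 1, θ^[k] v = v) : ∃ j, θ^[j] u = v := by
  obtain ⟨a, b, hab⟩ := hconn v u
  obtain ⟨q, hq1, hq⟩ := hv
  have hle : a ≤ a * q := Nat.le_mul_of_pos_right a hq1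
  refine ⟨a * q - a + b, ?_⟩
  have h1 : θ^[a * q - a + b] u = θ^[a * q - a] (θ^[b] u) := Function.iterate_add_apply θ _ _ u
  rw [h1, ← hab, ← Function.iterate_add_apply]
  have h2 : a * q - a + a = a * q := Nat.sub_add_cancel hle
  rw [h2]
  exact iterate_mul_cyc θ hq a

/-- Heights match: well-definedness of the canonical map between orbits. -/
lemma orbit_map_welldef (θ : A → A) (hconn : ∀ x y : A, ∃ n m : ℕ, θ^[n] x = θ^[m] y)
    (x y : A)
    (hpat : ∀ n : ℕ, (∃ k ≥ 1, θ^[k] (θ^[n] x) = θ^[n] x) →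
      (∃ k ≥ 1, θ^[k] (θ^[n] y) = θ^[n] y)) :
    ∀ n m : ℕ, θ^[n] x = θ^[m] x → θ^[n] y = θ^[m] y := by
  have main : ∀ n m : ℕ, n < m → θ^[n] x = θ^[m] x → θ^[n] y = θ^[m] y := by
    intro n m hlt he
    have hcx : ∃ k ≥ 1, θ^[k] (θ^[n] x) = θ^[n] x := by
      refine ⟨m - n, by omega, ?_⟩
      rw [← Function.iterate_add_apply]
      have : m - n + n = m := by omega
      rw [this]; exact he.symm
    have hcy := hpat n hcx
    obtain ⟨j, hj⟩ := cyc_orbit θ hconn (u := θ^[n] x) hcy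
    have hd : m - n + n = m := by omega
    -- θ^[j] (θ^[n] x) = θ^[n] y
    have hstep : θ^[m - n] (θ^[n] y) = θ^[n] y :=
      calc θ^[m - n] (θ^[n] y) = θ^[m - n] (θ^[j] (θ^[n] x)) := by rw [hj]
        _ = θ^[j] (θ^[m - n] (θ^[n] x)) := iter_comm θ _ _ _
        _ = θ^[j] (θ^[m] x) := by
            rw [← Function.iterate_add_apply θ (m - n) n x, hd]
        _ = θ^[j] (θ^[n] x) := by rw [← he]
        _ = θ^[n] y := hj
    have : θ^[m] y = θ^[m - n + n] y := by
      congr 1; omega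
    rw [this, Function.iterate_add_apply, hstep]
  intro n m he
  rcases lt_trichotomy n m with h | h | h
  · exact main n m h he
  · rw [h]
  · exact (main m n h he.symm).symm

/-- The orbit of `s` is finite if the iterates of `s` are not all distinct. -/
lemma orbit_finite_of_eq (θ : A → A) {s : A} {n m : ℕ} (h : n < m)
    (he : θ^[n] s = θ^[m] s) : {a | ∃ k, θ^[k] s = a}.Finite := by
  have key : ∀ k, ∃ j < m, θ^[k] s = θ^[j] s := by
    intro k
    induction k using Nat.strong_induction_on with
    | _ k ih =>
      by_cases hk : k < m
      · exact ⟨k, hk, rfl⟩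
      · push_neg at hk
        have h1 : θ^[k] s = θ^[k - m + n] s := by
          have hk' : k = k - m + m := by omega
          rw [hk', Function.iterate_add_apply, ← he, ← Function.iterate_add_apply]
          congr 1; omega
        obtain ⟨j, hj, he2⟩ := ih (k - m + n) (by omega)
        exact ⟨j, hj, h1.trans he2⟩
  have hsub : {a | ∃ k, θ^[k] s = a} ⊆ (fun j => θ^[j] s) '' Set.Iio m := by
    rintro a ⟨k, rfl⟩
    obtain ⟨j, hj, he2⟩ := key k
    exact ⟨j, hj, he2.symm⟩
  exact ((Set.finite_Iio m).image _).subset hsub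

/-- The intersection of a fiber with a single orbit is finite. -/
lemma fiber_orbit_finite (θ : A → A) (s x : A) :
    ({a | θ a = x} ∩ {a | ∃ k, θ^[k] s = a}).Finite := by
  by_cases hinj : Function.Injective fun n : ℕ => θ^[n] s
  · apply Set.Subsingleton.finite
    rintro a ⟨ha, n, rfl⟩ b ⟨hb, m, rfl⟩
    have hx : θ^[n + 1] s = θ^[m + 1] s := by
      rw [Function.iterate_succ_apply', Function.iterate_succ_apply']
      show θ (θ^[n] s) = θ (θ^[m] s)
      rw [Set.mem_setOf_eq] at ha hb
      rw [ha, hb]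
    have : n + 1 = m + 1 := hinj hx
    have : n = m := by omega
    rw [this]
  · rw [Function.not_injective_iff] at hinj
    obtain ⟨n, m, he, hne⟩ := hinj
    rcases hne.lt_or_gt with h | h
    · exact (orbit_finite_of_eq θ h he).subset Set.inter_subset_right
    · exact (orbit_finite_of_eq θ h he.symm).subset Set.inter_subset_right

/-- Fibers meet the subalgebra generated by a finite set in a finite set. -/
lemma fiber_cl_finite (θ : A → A) {S : Set A} (hS : S.Finite) (x : A) :
    ({a | θ a = x} ∩ cl θ S).Finite := by
  have hsub : {a | θ a = x} ∩ cl θ S ⊆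
      ⋃ s ∈ S, ({a | θ a = x} ∩ {a | ∃ k, θ^[k] s = a}) := by
    rintro a ⟨h1, s, hs, n, hn⟩
    exact Set.mem_biUnion hs ⟨h1, n, hn⟩
  exact (hS.biUnion fun s _ => fiber_orbit_finite θ s x).subset hsub

/-- The invariant maintained during the recursive construction. -/
def Inv (θ : A → A) (S T : Set A) (f : A → A) (n : ℕ) (g : A → A) : Prop :=
  Set.BijOn g (Dn θ S n) (Dn θ T n) ∧
  (∀ a ∈ Dn θ S n, g (θ a) = θ (g a)) ∧
  (∀ a ∈ cl θ S, g a = f a) ∧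
  (∀ x ∈ Dn θ S n, ({a | θ a = x} ∩ Dn θ S n).Finite ∨
    ({a | θ a = x} ⊆ Dn θ S n ∧ {a | θ a = g x} ⊆ Dn θ T n))

section Step

variable (θ : A → A) {S T : Set A} {f : A → A}

/-- A stage map preserves the cyclicity pattern. -/
lemma inv_pattern {n : ℕ} {g : A → A} (hg : Inv θ S T f n g) {x : A} (hx : x ∈ Dn θ S n) :
    ∀ m : ℕ, (∃ k ≥ 1, θ^[k] (θ^[m] x) = θ^[m] x) ↔
      (∃ k ≥ 1, θ^[k] (θ^[m] (g x)) = θ^[m] (g x)) := by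
  obtain ⟨hbij, hcomm, -, -⟩ := hg
  have hcl : ∀ a ∈ Dn θ S n, θ a ∈ Dn θ S n := fun a ha => Dn_closed θ ha
  have hiter : ∀ k, g (θ^[k] x) = θ^[k] (g x) := fun k => comm_iter θ hcl hcomm k x hx
  intro m
  have hkey : ∀ k, θ^[k] (θ^[m] (g x)) = g (θ^[k] (θ^[m] x)) := by
    intro k
    rw [← Function.iterate_add_apply, ← hiter (k + m), Function.iterate_add_apply]
  constructor
  · rintro ⟨k, hk1, hk⟩
    refine ⟨k, hk1, ?_⟩
    rw [hkey k, hk]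
    exact hiter m
  · rintro ⟨k, hk1, hk⟩
    refine ⟨k, hk1, ?_⟩
    have h1 : g (θ^[k] (θ^[m] x)) = g (θ^[m] x) := by
      rw [← hkey k, hk]
      exact (hiter m).symm
    have hm1 : θ^[k] (θ^[m] x) ∈ Dn θ S n := by
      rw [← Function.iterate_add_apply]
      exact iterate_mem_closed θ hcl hx (k + m)
    have hm2 : θ^[m] x ∈ Dn θ S n := iterate_mem_closed θ hcl hx m
    exact hbij.injOn hm1 hm2 h1


/-- Fibers inside the domain map onto fibers inside the range. -/
lemma inv_fiber_image {n : ℕ} {g : A → A} (hg : Inv θ S T f n g) {x : A} (hx : x ∈ Dn θ S n) :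
    g '' ({a | θ a = x} ∩ Dn θ S n) = {a | θ a = g x} ∩ Dn θ T n := by
  obtain ⟨hbij, hcomm, -, -⟩ := hg
  ext b
  constructor
  · rintro ⟨a, ⟨ha1, ha2⟩, rfl⟩
    refine ⟨?_, hbij.mapsTo ha2⟩
    show θ (g a) = g x
    rw [← hcomm a ha2, ha1]
  · rintro ⟨hb1, hb2⟩
    obtain ⟨c, hc, rfl⟩ := hbij.surjOn hb2
    have hθc : θ c ∈ Dn θ S n := Dn_closed θ hc
    have heq : g (θ c) = g x := by rw [hcomm c hc]; exact hb1
    exact ⟨c, ⟨hbij.injOn hθc hx heq, hc⟩, rfl⟩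

lemma step (hcard : HC θ) (n : ℕ) (g : A → A) (hg : Inv θ S T f n g) :
    ∃ g' : A → A, Inv θ S T f (n + 1) g' ∧ ∀ a ∈ Dn θ S n, g' a = g a := by
  classical
  obtain ⟨hbij, hcomm, hext, hfib⟩ := hg
  have hgInv : Inv θ S T f n g := ⟨hbij, hcomm, hext, hfib⟩
  have hB : ∀ x ∈ Dn θ S n, ∃ β : A → A,
      Set.BijOn β ({a | θ a = x} \ Dn θ S n) ({a | θ a = g x} \ Dn θ T n) := by
    intro x hx
    have hcardeq : Cardinal.mk ({a | θ a = x} \ Dn θ S n : Set A)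
        = Cardinal.mk ({a | θ a = g x} \ Dn θ T n : Set A) := by
      rcases hfib x hx with hfin | ⟨hsub, hsub'⟩
      · have h1 : Cardinal.mk (({a | θ a = x} \ Dn θ S n : Set A))
            + Cardinal.mk (({a | θ a = x} ∩ Dn θ S n : Set A))
            = Cardinal.mk {a | θ a = x} := by
          have := Cardinal.mk_diff_add_mk
            (S := {a | θ a = x}) (T := {a | θ a = x} ∩ Dn θ S n) Set.inter_subset_left
          rwa [Set.diff_self_inter] at this
        have h2 : Cardinal.mk (({a | θ a = g x} \ Dn θ T n : Set A))
            + Cardinal.mk (({a | θ a = g x} ∩ Dn θ T n : Set A))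
            = Cardinal.mk {a | θ a = g x} := by
          have := Cardinal.mk_diff_add_mk
            (S := {a | θ a = g x}) (T := {a | θ a = g x} ∩ Dn θ T n) Set.inter_subset_left
          rwa [Set.diff_self_inter] at this
        have himg := inv_fiber_image θ hgInv hx
        have hc2 : Cardinal.mk (({a | θ a = g x} ∩ Dn θ T n : Set A))
            = Cardinal.mk (({a | θ a = x} ∩ Dn θ S n : Set A)) := by
          rw [← himg]
          exact Cardinal.mk_image_eq_of_injOn g _ (hbij.injOn.mono Set.inter_subset_right)
        have hfx : Cardinal.mk {a | θ a = x} = Cardinal.mk {a | θ a = g x} :=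
          hcard x (g x) (inv_pattern θ hgInv hx)
        have hlt : Cardinal.mk (({a | θ a = x} ∩ Dn θ S n : Set A)) < Cardinal.aleph0 :=
          hfin.lt_aleph0
        rw [← h1, ← h2, hc2] at hfx
        exact (Cardinal.add_right_inj_of_lt_aleph0 hlt).mp hfx
      · rw [Set.diff_eq_empty.mpr hsub, Set.diff_eq_empty.mpr hsub']
    obtain ⟨e⟩ := Cardinal.eq.mp hcardeq
    refine ⟨fun a => if h : a ∈ ({a | θ a = x} \ Dn θ S n) then (e ⟨a, h⟩ : A) else a,
      ?_, ?_, ?_⟩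
    · intro a ha
      dsimp only
      rw [dif_pos ha]
      exact (e ⟨a, ha⟩).2
    · intro a ha b hb hab
      dsimp only at hab
      rw [dif_pos ha, dif_pos hb] at hab
      have h2 : (⟨a, ha⟩ : ↥({a | θ a = x} \ Dn θ S n)) = ⟨b, hb⟩ :=
        e.injective (Subtype.ext hab)
      exact congrArg Subtype.val h2
    · intro b hb
      refine ⟨(e.symm ⟨b, hb⟩ : A), (e.symm ⟨b, hb⟩).2, ?_⟩
      dsimp only
      rw [dif_pos (e.symm ⟨b, hb⟩).2]
      have h3 : (⟨(e.symm ⟨b, hb⟩ : A), (e.symm ⟨b, hb⟩).2⟩ :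
          ↥({a | θ a = x} \ Dn θ S n)) = e.symm ⟨b, hb⟩ := rfl
      rw [h3, Equiv.apply_symm_apply]
  choose! β hβ using hB
  refine ⟨fun a => if a ∈ Dn θ S n then g a else β (θ a) a,
    ⟨⟨?_, ?_, ?_⟩, ?_, ?_, ?_⟩, ?_⟩
  · -- MapsTo
    intro a ha
    dsimp only
    by_cases h : a ∈ Dn θ S n
    · rw [if_pos h]
      exact Dn_succ_subset θ T n (hbij.mapsTo h)
    · have hθ : θ a ∈ Dn θ S n := by
        rcases ha with h' | h'
        · exact absurd h' h
        · exact h'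
      rw [if_neg h]
      have hmem := (hβ (θ a) hθ).mapsTo (show a ∈ {b | θ b = θ a} \ Dn θ S n from ⟨rfl, h⟩)
      have heq : θ (β (θ a) a) = g (θ a) := hmem.1
      exact Or.inr (show θ (β (θ a) a) ∈ Dn θ T n by rw [heq]; exact hbij.mapsTo hθ)
  · -- InjOn
    intro a ha b hb hab
    dsimp only at hab
    by_cases h1 : a ∈ Dn θ S n <;> by_cases h2 : b ∈ Dn θ S n
    · rw [if_pos h1, if_pos h2] at hab
      exact hbij.injOn h1 h2 hab
    · exfalso
      rw [if_pos h1, if_neg h2] at hab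
      have hθb : θ b ∈ Dn θ S n := by
        rcases hb with h' | h'
        · exact absurd h' h2
        · exact h'
      have hmem := (hβ (θ b) hθb).mapsTo (show b ∈ {c | θ c = θ b} \ Dn θ S n from ⟨rfl, h2⟩)
      exact hmem.2 (hab ▸ hbij.mapsTo h1)
    · exfalso
      rw [if_neg h1, if_pos h2] at hab
      have hθa : θ a ∈ Dn θ S n := by
        rcases ha with h' | h'
        · exact absurd h' h1
        · exact h'
      have hmem := (hβ (θ a) hθa).mapsTo (show a ∈ {c | θ c = θ a} \ Dn θ S n from ⟨rfl, h1⟩)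
      exact hmem.2 (hab ▸ hbij.mapsTo h2)
    · rw [if_neg h1, if_neg h2] at hab
      have hθa : θ a ∈ Dn θ S n := by
        rcases ha with h' | h'
        · exact absurd h' h1
        · exact h'
      have hθb : θ b ∈ Dn θ S n := by
        rcases hb with h' | h'
        · exact absurd h' h2
        · exact h'
      have hma := (hβ (θ a) hθa).mapsTo (show a ∈ {c | θ c = θ a} \ Dn θ S n from ⟨rfl, h1⟩)
      have hmb := (hβ (θ b) hθb).mapsTo (show b ∈ {c | θ c = θ b} \ Dn θ S n from ⟨rfl, h2⟩)
      have e1 : θ (β (θ a) a) = g (θ a) := hma.1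
      have e2 : θ (β (θ b) b) = g (θ b) := hmb.1
      have heq : g (θ a) = g (θ b) := by rw [← e1, ← e2, hab]
      have hθeq : θ a = θ b := hbij.injOn hθa hθb heq
      rw [hθeq] at hab
      exact (hβ (θ b) hθb).injOn ⟨hθeq, h1⟩ ⟨rfl, h2⟩ hab
  · -- SurjOn
    intro b hb
    by_cases hbE : b ∈ Dn θ T n
    · obtain ⟨a, ha, rfl⟩ := hbij.surjOn hbE
      exact ⟨a, Dn_succ_subset θ S n ha, if_pos ha⟩
    · have hθb : θ b ∈ Dn θ T n := by
        rcases hb with h' | h'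
        · exact absurd h' hbE
        · exact h'
      obtain ⟨x, hx, hgx⟩ := hbij.surjOn hθb
      have hbmem : b ∈ {c | θ c = g x} \ Dn θ T n := ⟨hgx.symm, hbE⟩
      obtain ⟨a, ⟨hafib, haD⟩, hba⟩ := (hβ x hx).surjOn hbmem
      have hax : θ a = x := hafib
      refine ⟨a, Or.inr (show θ a ∈ Dn θ S n by rw [hax]; exact hx), ?_⟩
      dsimp only
      rw [if_neg haD, hax]
      exact hba
  · -- commuting
    intro a ha
    dsimp only
    by_cases h : a ∈ Dn θ S n
    · rw [if_pos h, if_pos (Dn_closed θ h)]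
      exact hcomm a h
    · have hθ : θ a ∈ Dn θ S n := by
        rcases ha with h' | h'
        · exact absurd h' h
        · exact h'
      rw [if_pos hθ, if_neg h]
      exact ((hβ (θ a) hθ).mapsTo (show a ∈ {c | θ c = θ a} \ Dn θ S n from ⟨rfl, h⟩)).1.symm
  · -- extends f
    intro a ha
    dsimp only
    rw [if_pos (Dn_mono θ S (Nat.zero_le n) ha)]
    exact hext a ha
  · -- fiber invariant
    intro x hx
    by_cases h : x ∈ Dn θ S n
    · right
      constructor
      · intro a hafib
        by_cases h1 : a ∈ Dn θ S n
        · exact Or.inl h1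
        · exact Or.inr (show θ a ∈ Dn θ S n by
            rw [show θ a = x from hafib]; exact h)
      · simp only [if_pos h]
        intro b hbfib
        by_cases h2 : b ∈ Dn θ T n
        · exact Or.inl h2
        · exact Or.inr (show θ b ∈ Dn θ T n by
            rw [show θ b = g x from hbfib]; exact hbij.mapsTo h)
    · left
      have hempty : {a | θ a = x} ∩ Dn θ S (n + 1) = ∅ := by
        ext a
        simp only [Set.mem_inter_iff, Set.mem_empty_iff_false, iff_false, not_and]
        intro hfa hD
        rcases hD with h' | h'
        · exact h (hfa ▸ Dn_closed θ h')
        · exact h (hfa ▸ h')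
      rw [hempty]
      exact Set.finite_empty
  · -- agreement
    intro a ha
    exact if_pos ha

end Step

section Build

variable (θ : A → A) (S T : Set A) (f : A → A)

noncomputable def Gseq (hcard : HC θ) (h0 : Inv θ S T f 0 f) :
    (n : ℕ) → {g : A → A // Inv θ S T f n g}
  | 0 => ⟨f, h0⟩
  | n + 1 =>
    ⟨Classical.choose (step θ hcard n (Gseq hcard h0 n).1 (Gseq hcard h0 n).2),
     (Classical.choose_spec (step θ hcard n (Gseq hcard h0 n).1 (Gseq hcard h0 n).2)).1⟩

lemma Gseq_succ (hcard : HC θ) (h0 : Inv θ S T f 0 f) (n : ℕ) :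
    ∀ a ∈ Dn θ S n, (Gseq θ S T f hcard h0 (n + 1)).1 a = (Gseq θ S T f hcard h0 n).1 a := by
  intro a ha
  show (Classical.choose (step θ hcard n (Gseq θ S T f hcard h0 n).1
      (Gseq θ S T f hcard h0 n).2)) a = _
  exact (Classical.choose_spec (step θ hcard n (Gseq θ S T f hcard h0 n).1
    (Gseq θ S T f hcard h0 n).2)).2 a ha

end Build

lemma extend (θ : A → A) (hconn : ∀ x y : A, ∃ n m : ℕ, θ^[n] x = θ^[m] y) (hcard : HC θ)
    {S T : Set A} {f : A → A} (hSfin : S.Finite) {s₀ : A} (hs₀ : s₀ ∈ S)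
    (hiso : IsoOn θ (cl θ S) (cl θ T) f) : ExtendsToAuto θ (cl θ S) f := by
  classical
  obtain ⟨hbij, hcomm⟩ := hiso
  have h0 : Inv θ S T f 0 f :=
    ⟨hbij, hcomm, fun a _ => rfl, fun x _ => Or.inl (fiber_cl_finite θ hSfin x)⟩
  set G := Gseq θ S T f hcard h0 with hG
  have hsucc := Gseq_succ θ S T f hcard h0
  have agree : ∀ m n, m ≤ n → ∀ a ∈ Dn θ S m, (G n).1 a = (G m).1 a := by
    intro m n h
    induction h with
    | refl => intro a _; rfl
    | @step n hmn ih =>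
      intro a ha
      rw [hsucc n a (Dn_mono θ S hmn ha)]
      exact ih a ha
  have hcov : ∀ a, ∃ n, a ∈ Dn θ S n := Dn_covers θ hconn hs₀
  have hs₀cl : s₀ ∈ cl θ S := ⟨s₀, hs₀, 0, rfl⟩
  obtain ⟨t₀, ht₀, -⟩ := hbij.mapsTo hs₀cl
  have hcovT : ∀ b, ∃ n, b ∈ Dn θ T n := Dn_covers θ hconn ht₀
  let g : A → A := fun a => (G (Nat.find (hcov a))).1 a
  have key : ∀ n, ∀ a ∈ Dn θ S n, g a = (G n).1 a := by
    intro n a ha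
    have hspec := Nat.find_spec (hcov a)
    rcases le_total (Nat.find (hcov a)) n with h | h
    · exact (agree _ n h a hspec).symm
    · exact agree n _ h a ha
  refine ⟨g, ⟨?_, ?_⟩, ?_, ?_⟩
  · intro a b hab
    obtain ⟨na, hna⟩ := hcov a
    obtain ⟨nb, hnb⟩ := hcov b
    have haM : a ∈ Dn θ S (max na nb) := Dn_mono θ S (le_max_left _ _) hna
    have hbM : b ∈ Dn θ S (max na nb) := Dn_mono θ S (le_max_right _ _) hnb
    rw [key _ a haM, key _ b hbM] at hab
    exact (G (max na nb)).2.1.injOn haM hbM hab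
  · intro b
    obtain ⟨n, hn⟩ := hcovT b
    obtain ⟨a, ha, hga⟩ := (G n).2.1.surjOn hn
    exact ⟨a, (key n a ha).trans hga⟩
  · intro a
    obtain ⟨n, hn⟩ := hcov a
    rw [key n (θ a) (Dn_closed θ hn), key n a hn]
    exact (G n).2.2.1 a hn
  · intro a ha
    rw [key 0 a ha]
    exact (G 0).2.2.2.1 a ha

end Stmt16

theorem stmt_16 {A : Type*} (θ : A → A)
    (hconn : ∀ x y : A, ∃ n m : ℕ, θ^[n] x = θ^[m] y) :
    (∀ S T : Set A, S.Finite → T.Finite → ∀ f : A → A,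
        IsoOn θ (cl θ S) (cl θ T) f → ExtendsToAuto θ (cl θ S) f)
    ↔ ∀ x y : A,
        (∀ n : ℕ, (∃ k ≥ 1, θ^[k] (θ^[n] x) = θ^[n] x) ↔
          (∃ k ≥ 1, θ^[k] (θ^[n] y) = θ^[n] y)) →
        Cardinal.mk {a | θ a = x} = Cardinal.mk {a | θ a = y} := by
  constructor
  · intro hU x y hpat
    classical
    have W : ∀ n m : ℕ, θ^[n] x = θ^[m] x → θ^[n] y = θ^[m] y :=
      Stmt16.orbit_map_welldef θ hconn x y (fun n => (hpat n).mp)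
    have W' : ∀ n m : ℕ, θ^[n] y = θ^[m] y → θ^[n] x = θ^[m] x :=
      Stmt16.orbit_map_welldef θ hconn y x (fun n => (hpat n).mpr)
    let f : A → A := fun a => if h : ∃ n : ℕ, θ^[n] x = a then θ^[h.choose] y else a
    have hf : ∀ n : ℕ, f (θ^[n] x) = θ^[n] y := by
      intro n
      have h : ∃ k : ℕ, θ^[k] x = θ^[n] x := ⟨n, rfl⟩
      show (if h : ∃ k : ℕ, θ^[k] x = θ^[n] x then θ^[h.choose] y else θ^[n] x) = θ^[n] y
      rw [dif_pos h]
      exact W h.choose n h.choose_spec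
    have hclx : ∀ a, a ∈ cl θ {x} ↔ ∃ n : ℕ, θ^[n] x = a := by
      intro a
      constructor
      · rintro ⟨s, hs, n, hn⟩
        have : s = x := hs
        exact ⟨n, this ▸ hn⟩
      · rintro ⟨n, hn⟩
        exact ⟨x, rfl, n, hn⟩
    have hcly : ∀ a, a ∈ cl θ {y} ↔ ∃ n : ℕ, θ^[n] y = a := by
      intro a
      constructor
      · rintro ⟨s, hs, n, hn⟩
        have : s = y := hs
        exact ⟨n, this ▸ hn⟩
      · rintro ⟨n, hn⟩
        exact ⟨y, rfl, n, hn⟩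
    have hiso : IsoOn θ (cl θ {x}) (cl θ {y}) f := by
      refine ⟨⟨?_, ?_, ?_⟩, ?_⟩
      · intro a ha
        obtain ⟨n, rfl⟩ := (hclx a).mp ha
        rw [hf n]
        exact (hcly _).mpr ⟨n, rfl⟩
      · intro a ha b hb hab
        obtain ⟨n, rfl⟩ := (hclx a).mp ha
        obtain ⟨m, rfl⟩ := (hclx b).mp hb
        rw [hf n, hf m] at hab
        exact W' n m hab
      · intro b hb
        obtain ⟨m, rfl⟩ := (hcly b).mp hb
        exact ⟨θ^[m] x, (hclx _).mpr ⟨m, rfl⟩, hf m⟩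
      · intro a ha
        obtain ⟨n, rfl⟩ := (hclx a).mp ha
        have h1 : θ (θ^[n] x) = θ^[n + 1] x := (Function.iterate_succ_apply' θ n x).symm
        rw [h1, hf (n + 1), hf n, Function.iterate_succ_apply']
    obtain ⟨g, hgbij, hgcomm, hgext⟩ :=
      hU {x} {y} (Set.finite_singleton x) (Set.finite_singleton y) f hiso
    have hgx : g x = y := by
      have hx : x ∈ cl θ {x} := ⟨x, rfl, 0, rfl⟩
      rw [hgext x hx]
      exact hf 0
    have hto : ∀ a : {a | θ a = x}, θ (g a.1) = y := by
      rintro ⟨a, ha⟩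
      have ha' : θ a = x := ha
      show θ (g a) = y
      rw [← hgcomm a, ha', hgx]
    let e : {a | θ a = x} → {a | θ a = y} := fun a => ⟨g a.1, hto a⟩
    have hbij2 : Function.Bijective e := by
      constructor
      · intro a b hab
        apply Subtype.ext
        exact hgbij.1 (congrArg Subtype.val hab)
      · intro b
        obtain ⟨c, hc⟩ := hgbij.2 b.1
        have hb' : θ b.1 = y := b.2
        have hcx : θ c = x := by
          apply hgbij.1
          rw [hgcomm c, hc, hgx]
          exact hb'
        exact ⟨⟨c, hcx⟩, Subtype.ext hc⟩
    exact Cardinal.mk_congr (Equiv.ofBijective e hbij2)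
  · intro hcard S T hSfin hTfin f hiso
    rcases S.eq_empty_or_nonempty with rfl | ⟨s₀, hs₀⟩
    · refine ⟨id, Function.bijective_id, fun a => rfl, fun a ha => ?_⟩
      obtain ⟨s, hs, -⟩ := ha
      exact absurd hs (Set.notMem_empty s)
    · exact Stmt16.extend θ hconn hcard hSfin hs₀ hiso
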